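/- Let n ≥ 2, let G_i ∈ (0,1] and g_i > 0 for i ∈ {1,…,n}, and let A_{ij} = ∑_{t ≠ i, t ≠ j} g_t/G_t for distinct i, j. If g_i/(g_j/G_j + A_{ij}) = g_j/(g_i/G_i + A_{ij}) (i.e. H_i = H_j), then: (1) g_i = g_j if and only if G_i = G_j; and (2) if g_i = r·g_j with r ≥ 1, then G_i ≥ r²·G_j. -/
import Mathlib


theorem stmt7 (n : ℕ) (hn : 2 ≤ n) (G g : Fin n → ℝ)
    (hG : ∀ t, 0 < G t ∧ G t ≤ 1) (hg : ∀ t, 0 < g t)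
    (i j : Fin n) (hij : i ≠ j)
    (A : ℝ) (hA : A = ∑ t ∈ (Finset.univ.erase i).erase j, g t / G t)
    (hH : g i / (g j / G j + A) = g j / (g i / G i + A)) :
    (g i = g j ↔ G i = G j) ∧
    (∀ r : ℝ, 1 ≤ r → g i = r * g j → G i ≥ r ^ 2 * G j) := by
  obtain ⟨hGi, hGi1⟩ := hG i
  obtain ⟨hGj, hGj1⟩ := hG j
  have hgi := hg i
  have hgj := hg j
  have hA0 : 0 ≤ A := by
    rw [hA]
    exact Finset.sum_nonneg fun t _ => le_of_lt (div_pos (hg t) (hG t).1)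
  have hd1 : 0 < g j / G j + A := by positivity
  have hd2 : 0 < g i / G i + A := by positivity
  have key : g i * (g i / G i + A) = g j * (g j / G j + A) :=
    (div_eq_div_iff hd1.ne' hd2.ne').mp hH
  have key' : g i ^ 2 * G j + A * g i * G i * G j
      = g j ^ 2 * G i + A * g j * G i * G j := by
    field_simp at key
    nlinarith [key]
  constructor
  · constructor
    · intro h
      rw [h] at key'
      have : g j ^ 2 * G j = g j ^ 2 * G i := by linarith
      have h2 : (0:ℝ) < g j ^ 2 := by positivity
      exact (mul_left_cancel₀ h2.ne' this).symm
    · intro h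
      rw [h] at key'
      have hfac : (g i - g j) * ((g i + g j) * G j + A * G j ^ 2) = 0 := by
        linear_combination key'
      have hpos : (0:ℝ) < (g i + g j) * G j + A * G j ^ 2 := by positivity
      have := mul_eq_zero.mp hfac
      rcases this with h1 | h2
      · linarith
      · linarith
  · intro r hr hgij
    have h2 : (0:ℝ) < g j ^ 2 := by positivity
    rw [hgij] at key'
    nlinarith [key', h2,
      mul_nonneg (sub_nonneg.mpr hr) (mul_nonneg hA0 (mul_nonneg hgj.le (mul_nonneg hGi.le hGj.le)))]
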